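/- Let Ω ⊆ ℝ^d be bounded and open, let α, β, τ > 0, let c : ℝ → ℝ be measurable with 0 < c̲ ≤ c(x) ≤ c̄ for all x, and let d : ℝ → ℝ be continuously differentiable with d ≥ 0 and |d'(x)| ≤ K for all x. Let V be a finite-dimensional linear subspace of the space of functions ℝ^d → ℝ all of whose elements are continuously differentiable on ℝ^d, and assume that no nonzero element of V vanishes almost everywhere on Ω. Then for every R ∈ V there exists S ∈ V such that for all v ∈ V: ∫_Ω [ c(|∇R(x)|) τ⁻¹ (S(x) − R(x)) v(x) + α ∇S(x)·∇v(x) + β D(S(x), R(x)) v(x) ] dx = 0. -/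

import Mathlib

open MeasureTheory Set
open scoped RealInnerProductSpace

/-- The difference quotient `D(a,b) = (d(a) − d(b))/(a − b)` of a differentiable
function `d`, with `D(a,a) = d'(a)`. -/
noncomputable def diffQuot (d : ℝ → ℝ) (a b : ℝ) : ℝ :=
  if a = b then deriv d a else (d a - d b) / (a - b)

theorem diffQuot_eq {d : ℝ → ℝ} (hd : ContDiff ℝ 1 d) (a b : ℝ) :
    diffQuot d a b = ∫ t in (0:ℝ)..1, deriv d (b + t * (a - b)) := by
  rcases eq_or_ne a b with h | h
  · subst h
    simp [diffQuot]
  · have hder : ∀ t ∈ uIcc (0:ℝ) 1, HasDerivAt (fun t => d (b + t * (a - b)))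
        (deriv d (b + t * (a - b)) * (a - b)) t := by
      intro t _
      have h1 : HasDerivAt (fun t : ℝ => b + t * (a - b)) (a - b) t := by
        simpa using ((hasDerivAt_id t).mul_const (a - b)).const_add b
      exact (((hd.differentiable one_ne_zero) _).hasDerivAt.comp t h1)
    have hcont : Continuous fun t : ℝ => deriv d (b + t * (a - b)) * (a - b) :=
      ((hd.continuous_deriv le_rfl).comp (by continuity)).mul continuous_const
    have h2 := intervalIntegral.integral_eq_sub_of_hasDerivAt hder
      (hcont.intervalIntegrable 0 1)
    simp only [one_mul, zero_mul, add_zero] at h2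
    rw [intervalIntegral.integral_mul_const] at h2
    have h3 : (∫ t in (0:ℝ)..1, deriv d (b + t * (a - b))) = (d a - d b) / (a - b) := by
      rw [eq_div_iff (sub_ne_zero.2 h)]
      rw [h2]; ring_nf
    rw [h3, diffQuot, if_neg h]

theorem diffQuot_continuous {d : ℝ → ℝ} (hd : ContDiff ℝ 1 d) :
    Continuous fun p : ℝ × ℝ => diffQuot d p.1 p.2 := by
  have heq : (fun p : ℝ × ℝ => diffQuot d p.1 p.2)
      = fun p : ℝ × ℝ => ∫ t in (0:ℝ)..1, deriv d (p.2 + t * (p.1 - p.2)) := by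
    funext p; exact diffQuot_eq hd p.1 p.2
  rw [heq]
  apply intervalIntegral.continuous_parametric_intervalIntegral_of_continuous'
  exact (hd.continuous_deriv le_rfl).comp (by fun_prop)

theorem diffQuot_abs_le {d : ℝ → ℝ} (hd : ContDiff ℝ 1 d) {K : ℝ}
    (hK : ∀ x, |deriv d x| ≤ K) (a b : ℝ) : |diffQuot d a b| ≤ K := by
  rw [diffQuot_eq hd]
  have := intervalIntegral.norm_integral_le_of_norm_le_const
    (C := K) (f := fun t => deriv d (b + t * (a - b))) (a := 0) (b := 1)
    (fun t _ => by simpa [Real.norm_eq_abs] using hK _)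
  simpa [Real.norm_eq_abs] using this

/-- `φ d b s = ∫_b^s diffQuot d u b du`, the antiderivative of the difference quotient. -/
noncomputable def phiAux (d : ℝ → ℝ) (b s : ℝ) : ℝ := ∫ u in b..s, diffQuot d u b

theorem phiAux_continuous {d : ℝ → ℝ} (hd : ContDiff ℝ 1 d) :
    Continuous fun p : ℝ × ℝ => phiAux d p.1 p.2 := by
  have hc : Continuous (Function.uncurry fun (b u : ℝ) => diffQuot d u b) :=
    (diffQuot_continuous hd).comp (continuous_snd.prodMk continuous_fst)
  have h1 : Continuous fun p : ℝ × ℝ => ∫ u in (0:ℝ)..p.2, diffQuot d u p.1 :=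
    intervalIntegral.continuous_parametric_primitive_of_continuous hc
  have h2 : Continuous fun p : ℝ × ℝ => ∫ u in (0:ℝ)..p.1, diffQuot d u p.1 := by
    have := h1.comp (show Continuous fun p : ℝ × ℝ => (p.1, p.1) from by fun_prop)
    simpa [Function.comp_def] using this
  have heq : (fun p : ℝ × ℝ => phiAux d p.1 p.2) =
      fun p : ℝ × ℝ => (∫ u in (0:ℝ)..p.2, diffQuot d u p.1)
        - ∫ u in (0:ℝ)..p.1, diffQuot d u p.1 := by
    funext p
    have hint : ∀ r s : ℝ, IntervalIntegrable (fun u => diffQuot d u p.1) volume r s := by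
      intro r s
      exact (((diffQuot_continuous hd).comp
        (continuous_id.prodMk continuous_const)).intervalIntegrable r s)
    rw [phiAux, ← intervalIntegral.integral_interval_sub_left (hint 0 p.2) (hint 0 p.1)]
  rw [heq]; exact h1.sub h2

theorem phiAux_abs_le {d : ℝ → ℝ} (hd : ContDiff ℝ 1 d) {K : ℝ}
    (hK : ∀ x, |deriv d x| ≤ K) (b s : ℝ) : |phiAux d b s| ≤ K * |s - b| := by
  have := intervalIntegral.norm_integral_le_of_norm_le_const
    (C := K) (f := fun u => diffQuot d u b) (a := b) (b := s)
    (fun u _ => by simpa [Real.norm_eq_abs] using diffQuot_abs_le hd hK u b)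
  simpa [Real.norm_eq_abs, phiAux] using this

theorem phiAux_hasDerivAt {d : ℝ → ℝ} (hd : ContDiff ℝ 1 d) (b s : ℝ) :
    HasDerivAt (phiAux d b) (diffQuot d s b) s := by
  have hc : Continuous fun u => diffQuot d u b :=
    (diffQuot_continuous hd).comp (continuous_id.prodMk continuous_const)
  exact intervalIntegral.integral_hasDerivAt_right (hc.intervalIntegrable b s)
    (hc.stronglyMeasurableAtFilter _ _) hc.continuousAt


set_option maxHeartbeats 4000000 in
/-- existence for the implicit time step, Lemma 4.2: for every
previous iterate `R` in the finite-dimensional Galerkin space `V` of `C¹` functions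
(no nonzero element of which vanishes a.e. on `Ω`), the nonlinear problem of one
implicit time step admits at least one solution `S ∈ V`. -/
theorem implicit_step_exists
    {n : ℕ} (Ω : Set (EuclideanSpace ℝ (Fin n)))
    (hΩb : Bornology.IsBounded Ω) (hΩo : IsOpen Ω)
    (α β τ : ℝ) (hα : 0 < α) (hβ : 0 < β) (hτ : 0 < τ)
    (c : ℝ → ℝ) (hcmeas : Measurable c)
    (cl cu : ℝ) (hcl : 0 < cl) (hcbound : ∀ x, cl ≤ c x ∧ c x ≤ cu)
    (d : ℝ → ℝ) (hd : ContDiff ℝ 1 d) (hdnn : ∀ x, 0 ≤ d x)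
    (K : ℝ) (hd'bdd : ∀ x : ℝ, |deriv d x| ≤ K)
    (V : Submodule ℝ (EuclideanSpace ℝ (Fin n) → ℝ))
    (hVfin : FiniteDimensional ℝ V)
    (hVsmooth : ∀ f ∈ V, ContDiff ℝ 1 f)
    (hVae : ∀ f ∈ V, (∀ᵐ x ∂(volume.restrict Ω), f x = 0) → f = 0) :
    ∀ R ∈ V, ∃ S ∈ V, ∀ v ∈ V,
      ∫ x in Ω, (c ‖gradient R x‖ * τ⁻¹ * (S x - R x) * v x
        + α * ⟪gradient S x, gradient v x⟫ + β * diffQuot d (S x) (R x) * v x) = 0 := by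
  intro R hR
  classical
  have hK0 : (0:ℝ) ≤ K := le_trans (abs_nonneg _) (hd'bdd 0)
  set μ : Measure (EuclideanSpace ℝ (Fin n)) := volume.restrict Ω with hμ
  have hcompact : IsCompact (closure Ω) := hΩb.isCompact_closure
  -- continuous functions are integrable on Ω
  have key : ∀ g : EuclideanSpace ℝ (Fin n) → ℝ, Continuous g → Integrable g μ := by
    intro g hg
    exact (hg.continuousOn.integrableOn_compact hcompact).mono_set subset_closure
  -- gradient of a C¹ function is continuous
  have hgradcont : ∀ f : EuclideanSpace ℝ (Fin n) → ℝ, ContDiff ℝ 1 f →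
      Continuous (gradient f) := by
    intro f hf
    exact (InnerProductSpace.toDual ℝ _).symm.continuous.comp (hf.continuous_fderiv one_ne_zero)
  have hRcont : Continuous R := (hVsmooth R hR).continuous
  -- the frozen coefficient
  set w : EuclideanSpace ℝ (Fin n) → ℝ := fun x => c ‖gradient R x‖ with hw
  have hwmeas : Measurable w := hcmeas.comp (hgradcont R (hVsmooth R hR)).norm.measurable
  have hwlb : ∀ x, cl ≤ w x := fun x => (hcbound _).1
  have hwub : ∀ x, w x ≤ cu := fun x => (hcbound _).2
  have hw0 : ∀ x, 0 ≤ w x := fun x => le_trans hcl.le (hwlb x)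
  -- integrability of dominated measurable functions
  have hint : ∀ (h g : EuclideanSpace ℝ (Fin n) → ℝ), AEStronglyMeasurable h μ →
      Continuous g → (∀ x, |h x| ≤ g x) → Integrable h μ := by
    intro h g hh hg hb
    exact (key g hg).mono' hh (Filter.Eventually.of_forall fun x => by
      simpa [Real.norm_eq_abs] using hb x)
  -- basis of V and coordinates
  set m := Module.finrank ℝ V with hm
  set bV : Module.Basis (Fin m) ℝ V := Module.finBasis ℝ V with hbV
  set bf : Fin m → EuclideanSpace ℝ (Fin n) → ℝ := fun i => (bV i : _) with hbf
  set F : (Fin m → ℝ) → EuclideanSpace ℝ (Fin n) → ℝ := fun y x => ∑ i, y i * bf i x with hF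
  have hFcoe : ∀ y, F y = ((∑ i, y i • bV i : V) : EuclideanSpace ℝ (Fin n) → ℝ) := by
    intro y
    have h1 : ((∑ i, y i • bV i : V) : EuclideanSpace ℝ (Fin n) → ℝ)
        = ∑ i, y i • (bf i : EuclideanSpace ℝ (Fin n) → ℝ) := by
      push_cast
      rfl
    funext x
    rw [hF, h1]
    simp [Finset.sum_apply]
  have hFmem : ∀ y, F y ∈ V := by
    intro y
    rw [hFcoe y]
    exact (∑ i, y i • bV i : V).2
  have hFsmooth : ∀ y, ContDiff ℝ 1 (F y) := fun y => hVsmooth _ (hFmem y)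
  have hFcont : ∀ y, Continuous (F y) := fun y => (hFsmooth y).continuous
  have hFsurj : ∀ S, S ∈ V → ∃ y, F y = S := by
    intro S hS
    refine ⟨fun i => bV.repr ⟨S, hS⟩ i, ?_⟩
    rw [hFcoe]
    rw [bV.sum_repr ⟨S, hS⟩]
  have hFzero : ∀ y, F y = 0 → y = 0 := by
    intro y hy
    have h0 : (∑ i, y i • bV i : V) = 0 := by
      apply Subtype.ext
      rw [← hFcoe y, hy]
      rfl
    funext i
    exact Fintype.linearIndependent_iff.mp bV.linearIndependent y h0 i
  -- pointwise linearity of F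
  have hFadd : ∀ y z x, F (y + z) x = F y x + F z x := by
    intro y z x
    simp [hF, add_mul, Finset.sum_add_distrib]
  have hFsmul : ∀ (t : ℝ) y x, F (t • y) x = t * F y x := by
    intro t y x
    simp [hF, Finset.mul_sum, mul_assoc]
  have hFsub : ∀ y z x, F (y - z) x = F y x - F z x := by
    intro y z x
    have := hFadd (y - z) z x
    simp only [sub_add_cancel] at this
    linarith
  -- continuity in the coordinates
  have hFycont : ∀ x, Continuous fun y : Fin m → ℝ => F y x := by
    intro x
    exact continuous_finset_sum _ fun i _ => (continuous_apply i).mul continuous_const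
  -- bound
  set A : EuclideanSpace ℝ (Fin n) → ℝ := fun x => ∑ i, |bf i x| with hA
  have hAcont : Continuous A := by
    apply continuous_finset_sum
    intro i _
    exact ((hVsmooth _ (bV i).2).continuous).abs
  have hA0 : ∀ x, 0 ≤ A x := fun x => Finset.sum_nonneg fun i _ => abs_nonneg _
  have hFbound : ∀ y x, |F y x| ≤ ‖y‖ * A x := by
    intro y x
    calc |∑ i, y i * bf i x| ≤ ∑ i, |y i * bf i x| := Finset.abs_sum_le_sum_abs _ _
      _ ≤ ∑ i, ‖y‖ * |bf i x| := by
          apply Finset.sum_le_sum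
          intro i _
          rw [abs_mul]
          exact mul_le_mul_of_nonneg_right
            (by simpa [Real.norm_eq_abs] using norm_le_pi_norm y i) (abs_nonneg _)
      _ = ‖y‖ * A x := by rw [hA, Finset.mul_sum]
  -- gradient fields
  set g : Fin m → EuclideanSpace ℝ (Fin n) → EuclideanSpace ℝ (Fin n) :=
    fun i => gradient (bf i) with hg
  set gF : (Fin m → ℝ) → EuclideanSpace ℝ (Fin n) → EuclideanSpace ℝ (Fin n) :=
    fun y x => ∑ i, y i • g i x with hgF
  have hbfdiff : ∀ i x, DifferentiableAt ℝ (bf i) x :=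
    fun i x => ((hVsmooth _ (bV i).2).differentiable one_ne_zero) x
  have hgcont : ∀ i, Continuous (g i) := fun i => hgradcont _ (hVsmooth _ (bV i).2)
  have hgrad : ∀ y x, gradient (F y) x = gF y x := by
    intro y x
    have h1 : fderiv ℝ (F y) x = ∑ i, y i • fderiv ℝ (bf i) x := by
      rw [hF]
      rw [fderiv_fun_sum (fun i _ => ((hbfdiff i x).const_mul (y i)))]
      exact Finset.sum_congr rfl fun i _ => fderiv_const_mul (hbfdiff i x) (y i)
    show (InnerProductSpace.toDual ℝ _).symm (fderiv ℝ (F y) x) = _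
    rw [h1, map_sum]
    exact Finset.sum_congr rfl fun i _ => by rw [_root_.map_smul]; rfl
  have hgFadd : ∀ y z x, gF (y + z) x = gF y x + gF z x := by
    intro y z x
    simp [hgF, add_smul, Finset.sum_add_distrib]
  have hgFsmul : ∀ (t : ℝ) y x, gF (t • y) x = t • gF y x := by
    intro t y x
    simp [hgF, Finset.smul_sum, smul_smul]
  have hgFcont : ∀ y, Continuous (gF y) := by
    intro y
    exact continuous_finset_sum _ fun i _ => (hgcont i).const_smul (y i)
  have hgFycont : ∀ x, Continuous fun y : Fin m → ℝ => gF y x := by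
    intro x
    exact continuous_finset_sum _ fun i _ => (continuous_apply i).smul continuous_const
  set B : EuclideanSpace ℝ (Fin n) → ℝ := fun x => ∑ i, ‖g i x‖ with hB
  have hBcont : Continuous B := continuous_finset_sum _ fun i _ => (hgcont i).norm
  have hB0 : ∀ x, 0 ≤ B x := fun x => Finset.sum_nonneg fun i _ => norm_nonneg _
  have hgFbound : ∀ y x, ‖gF y x‖ ≤ ‖y‖ * B x := by
    intro y x
    calc ‖∑ i, y i • g i x‖ ≤ ∑ i, ‖y i • g i x‖ := norm_sum_le _ _
      _ ≤ ∑ i, ‖y‖ * ‖g i x‖ := by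
          apply Finset.sum_le_sum
          intro i _
          rw [norm_smul]
          exact mul_le_mul_of_nonneg_right (norm_le_pi_norm y i) (norm_nonneg _)
      _ = ‖y‖ * B x := by rw [hB, Finset.mul_sum]
  -- the energy functional
  set φ : ℝ → ℝ → ℝ := phiAux d with hφ
  set e : (Fin m → ℝ) → EuclideanSpace ℝ (Fin n) → ℝ := fun y x =>
    w x * (F y x - R x)^2 / (2*τ) + α/2 * ‖gF y x‖^2 + β * φ (R x) (F y x) with he
  set E : (Fin m → ℝ) → ℝ := fun y => ∫ x, e y x ∂μ with hE
  have hφcont : Continuous fun p : ℝ × ℝ => φ p.1 p.2 := phiAux_continuous hd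
  have hφabs : ∀ b s, |φ b s| ≤ K * |s - b| := phiAux_abs_le hd hd'bdd
  have hemeas : ∀ y, AEStronglyMeasurable (e y) μ := by
    intro y
    have h1 : Measurable fun x => w x * (F y x - R x)^2 / (2*τ) :=
      (hwmeas.mul (((hFcont y).sub hRcont).pow 2).measurable).div_const _
    have h2 : Continuous fun x => α/2 * ‖gF y x‖^2 :=
      continuous_const.mul (((hgFcont y).norm.pow 2))
    have h3 : Continuous fun x => β * φ (R x) (F y x) := by
      have h3a : Continuous fun x : EuclideanSpace ℝ (Fin n) => φ (R x) (F y x) := by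
        simpa [Function.comp_def] using hφcont.comp (hRcont.prodMk (hFcont y))
      exact continuous_const.mul h3a
    exact ((h1.add h2.measurable).add h3.measurable).aestronglyMeasurable
  -- the pointwise bound on the energy integrand
  set bnd : ℝ → EuclideanSpace ℝ (Fin n) → ℝ := fun M x =>
    cu * (M * A x + |R x|)^2 / (2*τ) + α/2 * (M * B x)^2 + β * (K * (M * A x + |R x|)) with hbnd
  have hbndcont : ∀ M, Continuous (bnd M) := by
    intro M
    apply Continuous.add
    apply Continuous.add
    · exact (continuous_const.mul (((continuous_const.mul hAcont).add hRcont.abs).pow 2)).div_const _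
    · exact continuous_const.mul ((continuous_const.mul hBcont).pow 2)
    · exact continuous_const.mul (continuous_const.mul
        ((continuous_const.mul hAcont).add hRcont.abs))
  have hebound : ∀ (M : ℝ) (y : Fin m → ℝ), 0 ≤ M → ‖y‖ ≤ M → ∀ x, |e y x| ≤ bnd M x := by
    intro M y hM hyM x
    have hFb : |F y x| ≤ M * A x := le_trans (hFbound y x)
      (mul_le_mul_of_nonneg_right hyM (hA0 x))
    have hgFb : ‖gF y x‖ ≤ M * B x := le_trans (hgFbound y x)
      (mul_le_mul_of_nonneg_right hyM (hB0 x))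
    have hu : |F y x - R x| ≤ M * A x + |R x| := le_trans (abs_sub _ _) (by gcongr)
    have hφb : |φ (R x) (F y x)| ≤ K * (M * A x + |R x|) := by
      refine le_trans (hφabs _ _) ?_
      exact mul_le_mul_of_nonneg_left hu hK0
    have hsq : (F y x - R x)^2 ≤ (M * A x + |R x|)^2 := by
      rw [← sq_abs (F y x - R x)]
      exact pow_le_pow_left₀ (abs_nonneg _) hu 2
    have t1 : |w x * (F y x - R x)^2 / (2*τ)| ≤ cu * (M * A x + |R x|)^2 / (2*τ) := by
      have h2τ : (0:ℝ) < 2*τ := by positivity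
      rw [abs_div, abs_mul, abs_of_nonneg (hw0 x), abs_of_nonneg (sq_nonneg (F y x - R x)),
        abs_of_nonneg h2τ.le, div_le_div_iff₀ h2τ h2τ]
      have hmm : w x * (F y x - R x)^2 ≤ cu * (M * A x + |R x|)^2 :=
        mul_le_mul (hwub x) hsq (sq_nonneg _) (le_trans (hw0 x) (hwub x))
      nlinarith [h2τ, hmm]
    have t2 : |α/2 * ‖gF y x‖^2| ≤ α/2 * (M * B x)^2 := by
      rw [abs_mul, abs_of_nonneg (by positivity : (0:ℝ) ≤ α/2), abs_of_nonneg (sq_nonneg _)]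
      apply mul_le_mul_of_nonneg_left ?_ (by positivity)
      exact pow_le_pow_left₀ (norm_nonneg _) hgFb 2
    have t3 : |β * φ (R x) (F y x)| ≤ β * (K * (M * A x + |R x|)) := by
      rw [abs_mul, abs_of_nonneg hβ.le]
      exact mul_le_mul_of_nonneg_left hφb hβ.le
    calc |e y x| ≤ |w x * (F y x - R x)^2 / (2*τ)| + |α/2 * ‖gF y x‖^2|
          + |β * φ (R x) (F y x)| := abs_add_three _ _ _
      _ ≤ bnd M x := by rw [hbnd]; exact add_le_add (add_le_add t1 t2) t3
  have heycont : ∀ x, Continuous fun y : Fin m → ℝ => e y x := by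
    intro x
    apply Continuous.add
    apply Continuous.add
    · exact (continuous_const.mul (((hFycont x).sub continuous_const).pow 2)).div_const _
    · exact continuous_const.mul ((hgFycont x).norm.pow 2)
    · have h3a : Continuous fun y : Fin m → ℝ => φ (R x) (F y x) := by
        simpa [Function.comp_def] using hφcont.comp (continuous_const.prodMk (hFycont x))
      exact continuous_const.mul h3a
  -- continuity of the energy
  have hEcont : Continuous E := by
    rw [continuous_iff_continuousAt]
    intro y₀
    have hMnn : (0:ℝ) ≤ ‖y₀‖ + 1 := by positivity
    apply continuousAt_of_dominated (bound := bnd (‖y₀‖ + 1))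
    · exact Filter.Eventually.of_forall fun y => hemeas y
    · filter_upwards [Metric.ball_mem_nhds y₀ one_pos] with y hy
      apply Filter.Eventually.of_forall
      intro x
      apply hebound (‖y₀‖ + 1) y hMnn ?_ x
      have := mem_ball_iff_norm.mp hy
      calc ‖y‖ = ‖y₀ + (y - y₀)‖ := by ring_nf
        _ ≤ ‖y₀‖ + ‖y - y₀‖ := norm_add_le _ _
        _ ≤ ‖y₀‖ + 1 := by
            have : ‖y - y₀‖ < 1 := by rwa [← norm_sub_rev y₀ y] at this
            linarith
    · exact key _ (hbndcont _)
    · exact Filter.Eventually.of_forall fun x => (heycont x).continuousAt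
  -- the quadratic form and its positivity
  set Q : (Fin m → ℝ) → ℝ := fun z => ∫ x, (F z x)^2 ∂μ with hQ
  have hQnonneg : ∀ z, 0 ≤ Q z := fun z => integral_nonneg fun x => sq_nonneg _
  have hQhom : ∀ (t : ℝ) z, Q (t • z) = t^2 * Q z := by
    intro t z
    have hpt : (fun x => (F (t • z) x)^2) = fun x => t^2 * (F z x)^2 := by
      funext x
      rw [hFsmul]
      ring
    rw [hQ]
    simp only
    rw [hpt, integral_const_mul]
  have hQcont : Continuous Q := by
    rw [continuous_iff_continuousAt]
    intro y₀
    have hMnn : (0:ℝ) ≤ ‖y₀‖ + 1 := by positivity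
    apply continuousAt_of_dominated (bound := fun x => ((‖y₀‖ + 1) * A x)^2)
    · exact Filter.Eventually.of_forall fun y => (((hFcont y).pow 2)).aestronglyMeasurable
    · filter_upwards [Metric.ball_mem_nhds y₀ one_pos] with y hy
      apply Filter.Eventually.of_forall
      intro x
      have hyn : ‖y‖ ≤ ‖y₀‖ + 1 := by
        have := mem_ball_iff_norm.mp hy
        calc ‖y‖ = ‖y₀ + (y - y₀)‖ := by ring_nf
          _ ≤ ‖y₀‖ + ‖y - y₀‖ := norm_add_le _ _
          _ ≤ ‖y₀‖ + 1 := by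
              have : ‖y - y₀‖ < 1 := by rwa [← norm_sub_rev y₀ y] at this
              linarith
      have h1 : |F y x| ≤ (‖y₀‖ + 1) * A x :=
        le_trans (hFbound y x) (mul_le_mul_of_nonneg_right hyn (hA0 x))
      rw [Real.norm_eq_abs, abs_of_nonneg (sq_nonneg _), ← sq_abs (F y x)]
      exact pow_le_pow_left₀ (abs_nonneg _) h1 2
    · exact key _ ((continuous_const.mul hAcont).pow 2)
    · exact Filter.Eventually.of_forall fun x => (((hFycont x).pow 2)).continuousAt
  -- positive definiteness of Q
  obtain ⟨δ, hδpos, hδ⟩ : ∃ δ > (0:ℝ), ∀ z, δ * ‖z‖^2 ≤ Q z := by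
    rcases isEmpty_or_nonempty (Fin m) with hm' | hm'
    · refine ⟨1, one_pos, fun z => ?_⟩
      have hz : z = 0 := Subsingleton.elim z 0
      rw [hz]
      simpa using hQnonneg 0
    · haveI : Nontrivial (Fin m → ℝ) := Function.nontrivial
      have hsph : (Metric.sphere (0 : Fin m → ℝ) 1).Nonempty :=
        NormedSpace.sphere_nonempty.mpr one_pos.le
      obtain ⟨z₀, hz₀, hmin⟩ := (isCompact_sphere (0 : Fin m → ℝ) 1).exists_isMinOn hsph
        hQcont.continuousOn
      have hz₀norm : ‖z₀‖ = 1 := by simpa using hz₀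
      have hQz₀pos : 0 < Q z₀ := by
        rcases (hQnonneg z₀).lt_or_eq with h | h
        · exact h
        · exfalso
          have hi : Integrable (fun x => (F z₀ x)^2) μ := key _ ((hFcont z₀).pow 2)
          have h0 : (fun x => (F z₀ x)^2) =ᵐ[μ] 0 :=
            (integral_eq_zero_iff_of_nonneg (fun x => sq_nonneg _) hi).1 h.symm
          have hzero : F z₀ = 0 := by
            apply hVae _ (hFmem z₀)
            filter_upwards [h0] with x hx
            exact (pow_eq_zero_iff two_ne_zero).mp (by simpa using hx)
          have := hFzero z₀ hzero
          rw [this] at hz₀norm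
          simp at hz₀norm
      refine ⟨Q z₀, hQz₀pos, fun z => ?_⟩
      rcases eq_or_ne z 0 with rfl | hz
      · simpa using hQnonneg 0
      · have hnz : ‖z‖ ≠ 0 := norm_ne_zero_iff.2 hz
        have hu : (‖z‖⁻¹ • z) ∈ Metric.sphere (0 : Fin m → ℝ) 1 := by
          simp only [Metric.mem_sphere, dist_zero_right, norm_smul, norm_inv, norm_norm]
          exact inv_mul_cancel₀ hnz
        have h1 : Q z = ‖z‖^2 * Q (‖z‖⁻¹ • z) := by
          rw [← hQhom]
          congr 1
          rw [smul_smul, mul_inv_cancel₀ hnz, one_smul]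
        have h2 : Q z₀ ≤ Q (‖z‖⁻¹ • z) := hmin hu
        rw [h1]
        nlinarith [sq_nonneg ‖z‖]
  -- coercivity
  obtain ⟨yR, hyR⟩ := hFsurj R hR
  set CL : ℝ := ∫ x, A x ∂μ with hCL
  have hCL0 : 0 ≤ CL := integral_nonneg fun x => hA0 x
  have habsint : ∀ z, Integrable (fun x => |F z x|) μ := fun z => key _ (hFcont z).abs
  have habsle : ∀ z, ∫ x, |F z x| ∂μ ≤ ‖z‖ * CL := by
    intro z
    rw [hCL, ← integral_const_mul]
    apply integral_mono (habsint z) (key _ (continuous_const.mul hAcont))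
    intro x
    exact hFbound z x
  have hcoer : ∀ y, cl * δ / (2*τ) * ‖y - yR‖^2 - β*K*CL*‖y - yR‖ ≤ E y := by
    intro y
    set z := y - yR with hz
    have hFz : ∀ x, F z x = F y x - R x := by
      intro x
      rw [hz, hFsub, hyR]
    have hpt : ∀ x, cl * (F z x)^2/(2*τ) - β*K*|F z x| ≤ e y x := by
      intro x
      have h1 : |φ (R x) (F y x)| ≤ K * |F z x| := by
        have h2 := hφabs (R x) (F y x)
        rwa [← hFz x] at h2
      have h3 : -(K * |F z x|) ≤ φ (R x) (F y x) := neg_le_of_abs_le h1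
      have h4 : cl * (F z x)^2/(2*τ) ≤ w x * (F z x)^2/(2*τ) := by
        have h2τ : (0:ℝ) < 2*τ := by positivity
        apply div_le_div_of_nonneg_right ?_ h2τ.le
        exact mul_le_mul_of_nonneg_right (hwlb x) (sq_nonneg _)
      have h5 : (0:ℝ) ≤ α/2 * ‖gF y x‖^2 := by positivity
      rw [he]
      simp only
      rw [← hFz x]
      have hβφ := mul_le_mul_of_nonneg_left h3 hβ.le
      linarith [h4, h5, hβφ]
    have hi1 : Integrable (fun x => cl * (F z x)^2/(2*τ) - β*K*|F z x|) μ := by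
      apply Integrable.sub
      · exact key _ (((continuous_const.mul ((hFcont z).pow 2))).div_const _)
      · exact key _ (continuous_const.mul (hFcont z).abs)
    have hi2 : Integrable (e y) μ :=
      hint (e y) (bnd ‖y‖ ) (hemeas y) (hbndcont _) (hebound ‖y‖ y (norm_nonneg y) le_rfl)
    have hmono := integral_mono hi1 hi2 hpt
    have hlhs : ∫ x, (cl * (F z x)^2/(2*τ) - β*K*|F z x|) ∂μ
        = cl/(2*τ) * Q z - β*K * ∫ x, |F z x| ∂μ := by
      rw [integral_sub (f := fun x => cl * (F z x)^2/(2*τ)) (g := fun x => β*K*|F z x|)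
        (key _ (((continuous_const.mul ((hFcont z).pow 2))).div_const _))
        (key _ (continuous_const.mul (hFcont z).abs))]
      congr 1
      · rw [hQ]
        simp only
        rw [← integral_const_mul]
        congr 1
        funext x
        ring
      · rw [← integral_const_mul]
    rw [hlhs] at hmono
    have h6 : cl / (2*τ) * (δ * ‖z‖^2) ≤ cl/(2*τ) * Q z :=
      mul_le_mul_of_nonneg_left (hδ z) (by positivity)
    have h7 : β*K * (∫ x, |F z x| ∂μ) ≤ β*K*(‖z‖ * CL) :=
      mul_le_mul_of_nonneg_left (habsle z) (by positivity)
    calc cl * δ / (2*τ) * ‖z‖^2 - β*K*CL*‖z‖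
        = cl / (2*τ) * (δ * ‖z‖^2) - β*K*(‖z‖ * CL) := by ring
      _ ≤ cl/(2*τ) * Q z - β*K * ∫ x, |F z x| ∂μ := by
          apply sub_le_sub h6 h7
      _ ≤ E y := hmono
  -- existence of a global minimiser
  set a : ℝ := cl * δ / (2*τ) with ha'
  have ha : 0 < a := by rw [ha']; positivity
  set bb : ℝ := β*K*CL with hbb'
  have hbb : 0 ≤ bb := by rw [hbb']; positivity
  set r₁ : ℝ := max 1 ((bb + |E yR| + 1)/a) with hr₁
  have hr₁1 : (1:ℝ) ≤ r₁ := le_max_left _ _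
  have hr₁2 : a * r₁ ≥ bb + |E yR| + 1 := by
    have := le_max_right 1 ((bb + |E yR| + 1)/a)
    calc bb + |E yR| + 1 = a * ((bb + |E yR| + 1)/a) := by field_simp
      _ ≤ a * r₁ := mul_le_mul_of_nonneg_left this ha.le
  obtain ⟨y₀, hy₀mem, hy₀min⟩ := (isCompact_closedBall yR r₁).exists_isMinOn
    ⟨yR, Metric.mem_closedBall_self (by linarith)⟩ hEcont.continuousOn
  have hy₀global : ∀ y, E y₀ ≤ E y := by
    intro y
    by_cases hy : y ∈ Metric.closedBall yR r₁
    · exact hy₀min hy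
    · have hr : r₁ < ‖y - yR‖ := by
        have := Metric.mem_closedBall.not.mp hy
        rw [dist_eq_norm] at this
        linarith [not_le.mp this]
      have h1 : E y₀ ≤ E yR := hy₀min (Metric.mem_closedBall_self (by linarith))
      have h2 := hcoer y
      have h3 : a * ‖y - yR‖ ≥ bb + |E yR| + 1 := by
        calc bb + |E yR| + 1 ≤ a * r₁ := hr₁2
          _ ≤ a * ‖y - yR‖ := mul_le_mul_of_nonneg_left hr.le ha.le
      have h4 : (1:ℝ) ≤ ‖y - yR‖ := by linarith
      have h5 : a * ‖y - yR‖^2 - bb * ‖y - yR‖ ≥ |E yR| + 1 := by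
        nlinarith [mul_nonneg (by linarith : (0:ℝ) ≤ ‖y - yR‖ - 1)
          (by linarith : (0:ℝ) ≤ a * ‖y - yR‖ - bb - |E yR| - 1), abs_nonneg (E yR)]
      have h6 := le_abs_self (E yR)
      have h7 : a * ‖y - yR‖^2 - bb*‖y - yR‖ ≤ E y := by
        calc a * ‖y - yR‖^2 - bb*‖y - yR‖ = cl * δ / (2*τ) * ‖y - yR‖^2
            - β*K*CL*‖y - yR‖ := by rw [ha', hbb']
          _ ≤ E y := hcoer y
      linarith
  -- the minimiser solves the Euler–Lagrange equation
  refine ⟨F y₀, hFmem y₀, ?_⟩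
  intro v hv
  obtain ⟨yv, hyv⟩ := hFsurj v hv
  set G : ℝ → EuclideanSpace ℝ (Fin n) → ℝ := fun t x =>
    w x * (F y₀ x + t * F yv x - R x)^2/(2*τ)
    + α/2 * (‖gF y₀ x‖^2 + 2*t*⟪gF y₀ x, gF yv x⟫ + t^2*‖gF yv x‖^2)
    + β * φ (R x) (F y₀ x + t * F yv x) with hG
  set G' : ℝ → EuclideanSpace ℝ (Fin n) → ℝ := fun t x =>
    w x * (F y₀ x + t * F yv x - R x) * F yv x / τ
    + α * (⟪gF y₀ x, gF yv x⟫ + t*‖gF yv x‖^2)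
    + β * diffQuot d (F y₀ x + t * F yv x) (R x) * F yv x with hG'
  -- the energy along the line through y₀ in direction yv
  have hEG : ∀ t, E (y₀ + t • yv) = ∫ x, G t x ∂μ := by
    intro t
    rw [hE]
    simp only
    congr 1
    funext x
    have h1 : F (y₀ + t • yv) x = F y₀ x + t * F yv x := by rw [hFadd, hFsmul]
    have h2 : gF (y₀ + t • yv) x = gF y₀ x + t • gF yv x := by rw [hgFadd, hgFsmul]
    have h3 : ‖gF y₀ x + t • gF yv x‖^2
        = ‖gF y₀ x‖^2 + 2*t*⟪gF y₀ x, gF yv x⟫ + t^2*‖gF yv x‖^2 := by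
      rw [norm_add_sq_real, real_inner_smul_right, norm_smul]
      simp only [Real.norm_eq_abs]
      rw [mul_pow, sq_abs]
      ring
    rw [he, hG]
    simp only
    rw [h1, h2, h3]
  -- measurability of the integrands
  have hGmeas : ∀ t, AEStronglyMeasurable (G t) μ := by
    intro t
    have h1 : Measurable fun x => w x * (F y₀ x + t * F yv x - R x)^2/(2*τ) := by
      apply Measurable.div_const
      apply hwmeas.mul
      exact ((((hFcont y₀).add (continuous_const.mul (hFcont yv))).sub hRcont).pow 2).measurable
    have h2 : Continuous fun x =>
        α/2 * (‖gF y₀ x‖^2 + 2*t*⟪gF y₀ x, gF yv x⟫ + t^2*‖gF yv x‖^2) := by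
      apply continuous_const.mul
      apply Continuous.add
      apply Continuous.add
      · exact (hgFcont y₀).norm.pow 2
      · exact continuous_const.mul ((hgFcont y₀).inner (hgFcont yv))
      · exact continuous_const.mul ((hgFcont yv).norm.pow 2)
    have h3 : Continuous fun x => β * φ (R x) (F y₀ x + t * F yv x) := by
      have h3a : Continuous fun x : EuclideanSpace ℝ (Fin n) =>
          φ (R x) (F y₀ x + t * F yv x) := by
        simpa [Function.comp_def] using hφcont.comp
          (hRcont.prodMk ((hFcont y₀).add (continuous_const.mul (hFcont yv))))
      exact continuous_const.mul h3a
    exact ((h1.add h2.measurable).add h3.measurable).aestronglyMeasurable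
  have hG'meas : ∀ t, AEStronglyMeasurable (G' t) μ := by
    intro t
    have h1 : Measurable fun x => w x * (F y₀ x + t * F yv x - R x) * F yv x / τ := by
      apply Measurable.div_const
      apply Measurable.mul ?_ (hFcont yv).measurable
      apply hwmeas.mul
      exact (((hFcont y₀).add (continuous_const.mul (hFcont yv))).sub hRcont).measurable
    have h2 : Continuous fun x => α * (⟪gF y₀ x, gF yv x⟫ + t*‖gF yv x‖^2) := by
      apply continuous_const.mul
      apply Continuous.add
      · exact (hgFcont y₀).inner (hgFcont yv)
      · exact continuous_const.mul ((hgFcont yv).norm.pow 2)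
    have h3 : Continuous fun x =>
        β * diffQuot d (F y₀ x + t * F yv x) (R x) * F yv x := by
      apply Continuous.mul ?_ (hFcont yv)
      apply continuous_const.mul
      simpa [Function.comp_def] using (diffQuot_continuous hd).comp
        (((hFcont y₀).add (continuous_const.mul (hFcont yv))).prodMk hRcont)
    exact ((h1.add h2.measurable).add h3.measurable).aestronglyMeasurable
  -- the uniform bound for the derivative on the unit ball of times
  set bndG : EuclideanSpace ℝ (Fin n) → ℝ := fun x =>
    cu * ((|F y₀ x| + |F yv x| + |R x|) * |F yv x|) / τ
    + α * (‖gF y₀ x‖ * ‖gF yv x‖ + ‖gF yv x‖^2)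
    + β * (K * |F yv x|) with hbndG
  have hbndGcont : Continuous bndG := by
    apply Continuous.add
    apply Continuous.add
    · apply Continuous.div_const
      apply continuous_const.mul
      exact (((hFcont y₀).abs.add (hFcont yv).abs).add hRcont.abs).mul (hFcont yv).abs
    · apply continuous_const.mul
      exact ((hgFcont y₀).norm.mul (hgFcont yv).norm).add ((hgFcont yv).norm.pow 2)
    · exact continuous_const.mul (continuous_const.mul (hFcont yv).abs)
  have hG'bound : ∀ x, ∀ t ∈ Metric.ball (0:ℝ) 1, |G' t x| ≤ bndG x := by
    intro x t ht
    have ht1 : |t| ≤ 1 := le_of_lt (by simpa using ht)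
    have hu : |F y₀ x + t * F yv x - R x| ≤ |F y₀ x| + |F yv x| + |R x| := by
      have h1 : |t * F yv x| ≤ |F yv x| := by
        rw [abs_mul]
        nlinarith [abs_nonneg (F yv x)]
      calc |F y₀ x + t * F yv x - R x| ≤ |F y₀ x + t * F yv x| + |R x| := abs_sub _ _
        _ ≤ |F y₀ x| + |t * F yv x| + |R x| := by gcongr; exact abs_add_le _ _
        _ ≤ |F y₀ x| + |F yv x| + |R x| := by gcongr
    have t1 : |w x * (F y₀ x + t * F yv x - R x) * F yv x / τ|
        ≤ cu * ((|F y₀ x| + |F yv x| + |R x|) * |F yv x|) / τ := by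
      rw [abs_div, abs_of_nonneg hτ.le, abs_mul, abs_mul, abs_of_nonneg (hw0 x)]
      apply div_le_div_of_nonneg_right ?_ hτ.le
      rw [mul_assoc]
      apply mul_le_mul (hwub x) ?_ (by positivity) (le_trans (hw0 x) (hwub x))
      exact mul_le_mul_of_nonneg_right hu (abs_nonneg _)
    have t2 : |α * (⟪gF y₀ x, gF yv x⟫ + t*‖gF yv x‖^2)|
        ≤ α * (‖gF y₀ x‖ * ‖gF yv x‖ + ‖gF yv x‖^2) := by
      rw [abs_mul, abs_of_nonneg hα.le]
      apply mul_le_mul_of_nonneg_left ?_ hα.le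
      calc |⟪gF y₀ x, gF yv x⟫ + t*‖gF yv x‖^2|
          ≤ |⟪gF y₀ x, gF yv x⟫| + |t*‖gF yv x‖^2| := abs_add_le _ _
        _ ≤ ‖gF y₀ x‖ * ‖gF yv x‖ + ‖gF yv x‖^2 := by
            apply add_le_add (abs_real_inner_le_norm _ _)
            rw [abs_mul, abs_of_nonneg (sq_nonneg ‖gF yv x‖)]
            nlinarith [sq_nonneg ‖gF yv x‖, abs_nonneg t]
    have t3 : |β * diffQuot d (F y₀ x + t * F yv x) (R x) * F yv x|
        ≤ β * (K * |F yv x|) := by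
      rw [abs_mul, abs_mul, abs_of_nonneg hβ.le, mul_assoc]
      apply mul_le_mul_of_nonneg_left ?_ hβ.le
      exact mul_le_mul_of_nonneg_right (diffQuot_abs_le hd hd'bdd _ _) (abs_nonneg _)
    calc |G' t x| ≤ |w x * (F y₀ x + t * F yv x - R x) * F yv x / τ|
          + |α * (⟪gF y₀ x, gF yv x⟫ + t*‖gF yv x‖^2)|
          + |β * diffQuot d (F y₀ x + t * F yv x) (R x) * F yv x| := abs_add_three _ _ _
      _ ≤ bndG x := by rw [hbndG]; exact add_le_add (add_le_add t1 t2) t3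
  -- the pointwise derivative
  have hGderiv : ∀ x, ∀ t : ℝ, HasDerivAt (fun s => G s x) (G' t x) t := by
    intro x t
    have hu : HasDerivAt (fun s : ℝ => F y₀ x + s * F yv x - R x) (F yv x) t := by
      simpa using (((hasDerivAt_id t).mul_const (F yv x)).const_add (F y₀ x)).sub_const (R x)
    have hu' : HasDerivAt (fun s : ℝ => F y₀ x + s * F yv x) (F yv x) t := by
      simpa using ((hasDerivAt_id t).mul_const (F yv x)).const_add (F y₀ x)
    have hd1 : HasDerivAt (fun s : ℝ => w x * (F y₀ x + s * F yv x - R x)^2/(2*τ))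
        (w x * (F y₀ x + t * F yv x - R x) * F yv x / τ) t := by
      have := ((hu.pow 2 : HasDerivAt (fun s : ℝ => (F y₀ x + s * F yv x - R x)^2) _ t).const_mul (w x)).div_const (2*τ)
      refine this.congr_deriv ?_
      field_simp
      ring
    have hd2 : HasDerivAt (fun s : ℝ =>
        α/2 * (‖gF y₀ x‖^2 + 2*s*⟪gF y₀ x, gF yv x⟫ + s^2*‖gF yv x‖^2))
        (α * (⟪gF y₀ x, gF yv x⟫ + t*‖gF yv x‖^2)) t := by
      have hA1 : HasDerivAt (fun s : ℝ => 2*s*⟪gF y₀ x, gF yv x⟫)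
          (2*⟪gF y₀ x, gF yv x⟫) t := by
        simpa using ((hasDerivAt_id t).const_mul 2).mul_const ⟪gF y₀ x, gF yv x⟫
      have hA2 : HasDerivAt (fun s : ℝ => s^2*‖gF yv x‖^2) (2*t*‖gF yv x‖^2) t := by
        simpa [pow_one] using (hasDerivAt_pow 2 t).mul_const (‖gF yv x‖^2)
      have := (((hA1.const_add (‖gF y₀ x‖^2)).add hA2 : HasDerivAt (fun s : ℝ =>
          ‖gF y₀ x‖^2 + 2*s*⟪gF y₀ x, gF yv x⟫ + s^2*‖gF yv x‖^2) _ t).const_mul (α/2))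
      refine this.congr_deriv ?_
      ring
    have hd3 : HasDerivAt (fun s : ℝ => β * φ (R x) (F y₀ x + s * F yv x))
        (β * diffQuot d (F y₀ x + t * F yv x) (R x) * F yv x) t := by
      have hphi := (phiAux_hasDerivAt hd (R x) (F y₀ x + t * F yv x)).comp t hu'
      have : HasDerivAt (fun s : ℝ => φ (R x) (F y₀ x + s * F yv x))
          (diffQuot d (F y₀ x + t * F yv x) (R x) * F yv x) t := by
        simpa [Function.comp_def, hφ] using hphi
      have := this.const_mul β
      refine this.congr_deriv ?_
      ring
    have := (hd1.add hd2).add hd3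
    exact this
  -- differentiate under the integral sign
  have hkey := hasDerivAt_integral_of_dominated_loc_of_deriv_le (μ := μ)
    (F := G) (F' := G') (x₀ := (0:ℝ)) (bound := bndG) (s := Metric.ball (0:ℝ) 1) (Metric.ball_mem_nhds _ one_pos)
    (Filter.Eventually.of_forall fun t => hGmeas t)
    (by
      have hG0 : G 0 = e y₀ := by
        funext x
        rw [hG, he]
        simp
      rw [hG0]
      exact hint (e y₀) (bnd ‖y₀‖) (hemeas y₀) (hbndcont _)
        (hebound ‖y₀‖ y₀ (norm_nonneg _) le_rfl))
    (hG'meas 0)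
    (Filter.Eventually.of_forall fun x => fun t ht => by
      simpa [Real.norm_eq_abs] using hG'bound x t ht)
    (key _ hbndGcont)
    (Filter.Eventually.of_forall fun x => fun t _ => hGderiv x t)
  -- the derivative of the energy along the line vanishes at the minimiser
  have hder : HasDerivAt (fun t : ℝ => E (y₀ + t • yv)) (∫ x, G' 0 x ∂μ) 0 := by
    have heq : (fun t : ℝ => E (y₀ + t • yv)) = fun t : ℝ => ∫ x, G t x ∂μ := funext hEG
    rw [heq]
    exact hkey.2
  have hloc : IsLocalMin (fun t : ℝ => E (y₀ + t • yv)) 0 := by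
    apply Filter.Eventually.of_forall
    intro t
    simpa using hy₀global (y₀ + t • yv)
  have hzero : ∫ x, G' 0 x ∂μ = 0 := hloc.hasDerivAt_eq_zero hder
  -- identify the integrand with the weak formulation
  have hfinal : ∀ x, c ‖gradient R x‖ * τ⁻¹ * (F y₀ x - R x) * v x
      + α * ⟪gradient (F y₀) x, gradient v x⟫
      + β * diffQuot d (F y₀ x) (R x) * v x = G' 0 x := by
    intro x
    rw [← hyv, hG']
    simp only [zero_mul, mul_zero, add_zero]
    rw [hgrad y₀ x, hgrad yv x, hw]
    simp only
    ring
  have hcongr := integral_congr_ae (μ := μ) (Filter.Eventually.of_forall hfinal)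
  exact hcongr.trans hzero
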